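/- arXiv:0912.4844 — 2 statements merged into one kernel-verified Lean document; each statement's English description precedes it below -/
import Mathlib

section
/- Let Γ be a commutative divisible group and k = ℚ. Then every finite-dimensional irreducible ℚ-linear representation of Γ is trivial (one-dimensional with trivial action); equivalently, the pro-algebraic completion of Γ over ℚ is pro-unipotent. -/
set_option maxHeartbeats 1000000
set_option synthInstance.maxHeartbeats 400000

open Submodule in
lemma fg_divisible_torsion {M : Type*} [AddCommGroup M] [AddMonoid.FG M] (x : M)
    (h : ∀ n : ℕ, 0 < n → ∃ y : M, n • y = x) : IsOfFinAddOrder x := by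
  haveI : AddGroup.FG M := AddGroup.fg_iff_addMonoid_fg.mpr ‹_›
  haveI : Module.Finite ℤ M := Module.Finite.iff_addGroup_fg.mpr ‹_›
  set T := Submodule.torsion ℤ M with hT
  let Q := M ⧸ T
  haveI : Module.Finite ℤ Q := Module.Finite.quotient ℤ _
  haveI : Module.IsTorsionFree ℤ Q := Submodule.QuotientTorsion.instIsTorsionFree
  haveI : Module.Free ℤ Q := Module.free_of_finite_type_torsion_free'
  let b := Module.Free.chooseBasis ℤ Q
  have hxq : T.mkQ x = 0 := by
    apply b.repr.injective
    simp only [map_zero]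
    ext i
    have : ∀ n : ℕ, 0 < n → (n : ℤ) ∣ b.repr (T.mkQ x) i := by
      intro n hn
      obtain ⟨y, hy⟩ := h n hn
      refine ⟨b.repr (T.mkQ y) i, ?_⟩
      rw [← hy]
      simp [map_nsmul, mul_comm]
    have := this ((b.repr (T.mkQ x) i).natAbs + 1) (Nat.succ_pos _)
    simpa using Int.eq_zero_of_abs_lt_dvd this (by
      push_cast; rw [Int.abs_eq_natAbs]; push_cast; omega)
  have hxT : x ∈ T := (Submodule.Quotient.mk_eq_zero T).mp hxq
  obtain ⟨⟨c, hc⟩, hcx⟩ := hxT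
  have hcx' : c • x = 0 := hcx
  have hc0 : c ≠ 0 := mem_nonZeroDivisors_iff_ne_zero.mp hc
  refine isOfFinAddOrder_iff_nsmul_eq_zero.mpr ⟨c.natAbs, by omega, ?_⟩
  have : (c.natAbs : ℤ) • x = 0 := by
    rcases Int.natAbs_eq c with h' | h'
    · rw [← h']; exact hcx'
    · have : ((c.natAbs : ℤ)) • x = -(c • x) := by rw [h']; simp
      rw [this, hcx', neg_zero]
  simpa using this

lemma Module.Finite.congr_module {R M : Type*} [Semiring R] [AddCommMonoid M]
    (m₁ m₂ : Module R M) (h : @Module.Finite R M _ _ m₁) (e : m₁ = m₂) :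
    @Module.Finite R M _ _ m₂ := e ▸ h

lemma fg_divisible_torsion' {G : Type*} [CommGroup G] [Monoid.FG G] (x : G)
    (h : ∀ n : ℕ, 0 < n → ∃ y : G, y ^ n = x) : IsOfFinOrder x := by
  haveI : AddMonoid.FG (Additive G) := Monoid.fg_iff_add_fg.mp ‹_›
  rw [← isOfFinAddOrder_ofMul_iff]
  apply fg_divisible_torsion
  intro n hn
  obtain ⟨y, hy⟩ := h n hn
  exact ⟨Additive.ofMul y, by rw [← ofMul_pow, hy]⟩

lemma int_dvd_all_eq_zero {c : ℤ} (h : ∀ n : ℕ, 0 < n → (n : ℤ) ∣ c) : c = 0 := by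
  have := h (c.natAbs + 1) (Nat.succ_pos _)
  exact Int.eq_zero_of_abs_lt_dvd this (by rw [Int.abs_eq_natAbs]; push_cast; omega)

open NumberField FractionalIdeal nonZeroDivisors in
lemma numberField_divisible_eq_one {K : Type*} [Field K] [NumberField K] (x : K) (hx : x ≠ 0)
    (h : ∀ n : ℕ, 0 < n → ∃ y : K, y ^ n = x) : x = 1 := by
  classical
  -- every n-th root of x is nonzero, and all counts of span x vanish
  have hcnt : ∀ v : IsDedekindDomain.HeightOneSpectrum (𝓞 K),
      count K v (spanSingleton (𝓞 K)⁰ x) = 0 := by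
    intro v
    apply int_dvd_all_eq_zero
    intro n hn
    obtain ⟨y, hy⟩ := h n hn
    have hy0 : y ≠ 0 := fun h0 => hx (by rw [← hy, h0, zero_pow hn.ne'])
    refine ⟨count K v (spanSingleton (𝓞 K)⁰ y), ?_⟩
    rw [← hy, ← spanSingleton_pow, count_pow]
  -- hence any z whose span has all counts 0 comes from a unit
  have key : ∀ z : K, z ≠ 0 →
      (∀ v : IsDedekindDomain.HeightOneSpectrum (𝓞 K),
        count K v (spanSingleton (𝓞 K)⁰ z) = 0) →
      ∃ u : (𝓞 K)ˣ, algebraMap (𝓞 K) K u = z := by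
    intro z hz hzc
    have hspan : spanSingleton (𝓞 K)⁰ z = 1 := by
      have hne : spanSingleton (𝓞 K)⁰ z ≠ 0 := by
        rwa [ne_eq, spanSingleton_eq_zero_iff]
      have := finprod_heightOneSpectrum_factorization' (K := K) hne
      rw [← this]
      have : ∀ v : IsDedekindDomain.HeightOneSpectrum (𝓞 K),
          ((v.asIdeal : FractionalIdeal (𝓞 K)⁰ K)) ^ (count K v (spanSingleton (𝓞 K)⁰ z))
            = 1 := by
        intro v; rw [hzc v, zpow_zero]
      rw [finprod_congr this, finprod_one]
    obtain ⟨r, hr⟩ := (mem_one_iff _).mp (hspan ▸ mem_spanSingleton_self (𝓞 K)⁰ z)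
    have hspaninv : spanSingleton (𝓞 K)⁰ z⁻¹ = 1 := by
      rw [← spanSingleton_inv, hspan, inv_one]
    obtain ⟨s, hs⟩ := (mem_one_iff _).mp (hspaninv ▸ mem_spanSingleton_self (𝓞 K)⁰ z⁻¹)
    have hinj := IsFractionRing.injective (𝓞 K) K
    have hrs : r * s = 1 := by
      apply hinj
      rw [_root_.map_mul, hr, hs, _root_.map_one, mul_inv_cancel₀ hz]
    exact ⟨⟨r, s, hrs, by rwa [mul_comm] at hrs⟩, hr⟩
  obtain ⟨u, hu⟩ := key x hx hcnt
  have hinj := IsFractionRing.injective (𝓞 K) K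
  -- u is divisible in the unit group
  have hdivu : ∀ n : ℕ, 0 < n → ∃ w : (𝓞 K)ˣ, w ^ n = u := by
    intro n hn
    obtain ⟨y, hy⟩ := h n hn
    have hy0 : y ≠ 0 := fun h0 => hx (by rw [← hy, h0, zero_pow hn.ne'])
    have hyc : ∀ v : IsDedekindDomain.HeightOneSpectrum (𝓞 K),
        count K v (spanSingleton (𝓞 K)⁰ y) = 0 := by
      intro v
      have := hcnt v
      rw [← hy, ← spanSingleton_pow, count_pow] at this
      have hn' : (n : ℤ) ≠ 0 := by exact_mod_cast hn.ne'
      exact (mul_eq_zero.mp this).resolve_left hn'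
    obtain ⟨w, hw⟩ := key y hy0 hyc
    refine ⟨w, Units.ext (hinj ?_)⟩
    rw [Units.val_pow_eq_pow_val, map_pow, hw, hy, hu]
  have hord : IsOfFinOrder u := fg_divisible_torsion' u hdivu
  -- finish using finiteness of the torsion subgroup
  haveI : Fintype (Units.torsion K) := Fintype.ofFinite _
  set M := Fintype.card (Units.torsion K) with hM
  have hM0 : 0 < M := Fintype.card_pos
  obtain ⟨w, hw⟩ := hdivu M hM0
  have hword : IsOfFinOrder w := by
    obtain ⟨k, hk, hk1⟩ := isOfFinOrder_iff_pow_eq_one.mp hord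
    exact isOfFinOrder_iff_pow_eq_one.mpr ⟨M * k, by positivity,
      by rw [pow_mul, hw, hk1]⟩
  have hwt : w ∈ Units.torsion K := (CommGroup.mem_torsion _).mpr hword
  have : (⟨w, hwt⟩ : Units.torsion K) ^ M = 1 := pow_card_eq_one
  have hw1 : w ^ M = 1 := by
    have := congrArg (Subtype.val) this
    push_cast at this
    exact this
  have hu1 : u = 1 := by rw [← hw, hw1]
  rw [← hu, hu1]
  simp

/-- Let `Γ` be a commutative divisible group.  Then every
finite-dimensional irreducible `ℚ`-linear representation of `Γ` is trivial:
it is one-dimensional and every element acts as the identity.  (Equivalently, the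
pro-algebraic completion of `Γ` over `ℚ` is pro-unipotent.) -/
theorem irreducible_rep_of_divisible_commGroup_is_trivial
    (Γ : Type*) [CommGroup Γ]
    (hdiv : ∀ (γ : Γ) (n : ℕ), 0 < n → ∃ δ : Γ, δ ^ n = γ)
    (V : Type*) [AddCommGroup V] [Module ℚ V] [FiniteDimensional ℚ V] [Nontrivial V]
    (ρ : Representation ℚ Γ V)
    (hirr : ∀ U : Submodule ℚ V, (∀ γ : Γ, U.map (ρ γ) ≤ U) → U = ⊥ ∨ U = ⊤) :
    Module.finrank ℚ V = 1 ∧ ∀ γ : Γ, ρ γ = LinearMap.id := by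
  classical
  set S : Subalgebra ℚ (Module.End ℚ V) := Algebra.adjoin ℚ (Set.range fun γ => ρ γ) with hS
  have hcomm : ∀ a ∈ Set.range fun γ => ρ γ, ∀ b ∈ Set.range fun γ => ρ γ,
      a * b = b * a := by
    rintro _ ⟨γ, rfl⟩ _ ⟨δ, rfl⟩
    rw [← map_mul, ← map_mul, mul_comm]
  letI : CommRing S := Algebra.adjoinCommRingOfComm ℚ hcomm
  have hmem : ∀ γ, ρ γ ∈ S := fun γ => Algebra.subset_adjoin ⟨γ, rfl⟩
  have hcommS : ∀ (a : S) (γ : Γ), (a : Module.End ℚ V) * ρ γ = ρ γ * (a : Module.End ℚ V) := by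
    intro a γ
    exact congrArg Subtype.val (mul_comm a (⟨ρ γ, hmem γ⟩ : S))
  have hinj : ∀ a : S, a ≠ 0 → Function.Injective (a : Module.End ℚ V) := by
    intro a ha
    have hker : ∀ γ, (LinearMap.ker (a : Module.End ℚ V)).map (ρ γ) ≤
        LinearMap.ker (a : Module.End ℚ V) := by
      rintro γ _ ⟨w, hw, rfl⟩
      simp only [SetLike.mem_coe, LinearMap.mem_ker] at hw
      rw [LinearMap.mem_ker]
      have : ((a : Module.End ℚ V) * ρ γ) w = (ρ γ * (a : Module.End ℚ V)) w := by
        rw [hcommS a γ]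
      simpa [Module.End.mul_apply, hw] using this
    rcases hirr _ (hker) with h | h
    · exact LinearMap.ker_eq_bot.mp h
    · exact absurd (Subtype.ext (LinearMap.ker_eq_top.mp h)) ha
  haveI : Nontrivial S := by
    obtain ⟨w, hw⟩ := exists_ne (0 : V)
    refine ⟨0, 1, fun h01 => hw ?_⟩
    have := congrArg Subtype.val h01
    have h0 : (0 : Module.End ℚ V) = 1 := this
    calc w = (1 : Module.End ℚ V) w := rfl
    _ = (0 : Module.End ℚ V) w := by rw [h0]
    _ = 0 := rfl
  haveI : NoZeroDivisors S := by
    constructor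
    intro a b hab
    by_contra hcon
    push_neg at hcon
    obtain ⟨ha, hb⟩ := hcon
    obtain ⟨w, hw⟩ := exists_ne (0 : V)
    have hbw : (b : Module.End ℚ V) w ≠ 0 := fun h0 =>
      hw (hinj b hb (by simpa using h0))
    have habw : (a : Module.End ℚ V) ((b : Module.End ℚ V) w) ≠ 0 := fun h0 =>
      hbw (hinj a ha (by simpa using h0))
    apply habw
    have := congrArg Subtype.val hab
    have h0 : (a : Module.End ℚ V) * (b : Module.End ℚ V) = 0 := this
    calc (a : Module.End ℚ V) ((b : Module.End ℚ V) w)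
        = ((a : Module.End ℚ V) * (b : Module.End ℚ V)) w := rfl
    _ = (0 : Module.End ℚ V) w := by rw [h0]
    _ = 0 := rfl
  haveI : IsDomain S := NoZeroDivisors.to_isDomain S
  haveI : FiniteDimensional ℚ S := FiniteDimensional.of_injective
    (Subalgebra.val S).toLinearMap Subtype.val_injective
  have hfield : IsField S := by
    refine ⟨exists_pair_ne S, mul_comm, ?_⟩
    intro a ha
    have hinjmul : Function.Injective (LinearMap.mulLeft ℚ a) := by
      intro p q hpq
      simp only [LinearMap.mulLeft_apply] at hpq
      exact mul_left_cancel₀ ha hpq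
    obtain ⟨b, hb⟩ := (LinearMap.injective_iff_surjective.mp hinjmul) 1
    exact ⟨b, hb⟩
  letI : Field S := hfield.toField
  haveI : CharZero S := charZero_of_injective_algebraMap (algebraMap ℚ S).injective
  haveI : NumberField S := by
    have hfd : FiniteDimensional ℚ S := ‹_›
    exact @NumberField.mk ↥S _ ‹CharZero ↥S›
      (Module.Finite.congr_module _ _ hfd (Subsingleton.elim _ _))
  have hone : ∀ γ : Γ, (⟨ρ γ, hmem γ⟩ : S) = 1 := by
    intro γ
    apply numberField_divisible_eq_one
    · intro h0
      have := congrArg Subtype.val h0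
      have h0' : ρ γ = (0 : Module.End ℚ V) := this
      obtain ⟨w, hw⟩ := exists_ne (0 : V)
      apply hw
      have : (ρ γ⁻¹ * ρ γ) w = w := by rw [← map_mul, inv_mul_cancel, map_one]; rfl
      rw [← this]
      calc (ρ γ⁻¹ * ρ γ) w = ρ γ⁻¹ (ρ γ w) := rfl
      _ = ρ γ⁻¹ ((0 : Module.End ℚ V) w) := by rw [← h0']
      _ = ρ γ⁻¹ 0 := rfl
      _ = 0 := map_zero _
    · intro n hn
      obtain ⟨δ, hδ⟩ := hdiv γ n hn
      refine ⟨⟨ρ δ, hmem δ⟩, Subtype.ext ?_⟩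
      calc ((⟨ρ δ, hmem δ⟩ : S) ^ n : S).val = (ρ δ) ^ n := by
            exact SubmonoidClass.coe_pow _ n
      _ = ρ (δ ^ n) := (map_pow ρ δ n).symm
      _ = ρ γ := by rw [hδ]
  have hid : ∀ γ : Γ, ρ γ = LinearMap.id := by
    intro γ
    have := congrArg Subtype.val (hone γ)
    exact this
  refine ⟨?_, hid⟩
  obtain ⟨w, hw⟩ := exists_ne (0 : V)
  rcases hirr (Submodule.span ℚ {w}) (fun γ => by rw [hid γ, Submodule.map_id]) with h | h
  · exact absurd (Submodule.span_eq_bot.mp h w (Set.mem_singleton w)) hw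
  · have h1 : Module.finrank ℚ (Submodule.span ℚ ({w} : Set V)) = 1 :=
      finrank_span_singleton hw
    rw [h] at h1
    rwa [finrank_top] at h1
end

section
/- For each q ≥ 0, the cubical abelian group n ↦ □(n,q) of degree-q polynomial differential forms on the standard n-cube satisfies the cubical Kan extension property with respect to boundary inclusions: the unique map □(·,q) → * is a trivial fibration of cubical sets, i.e. given elements x_i^ε ∈ □(n−1,q) for 1 ≤ i ≤ n, ε ∈ {0,1} satisfying the compatibility relations ∂_i^{ε₁} x_j^{ε₂} = ∂_{j−1}^{ε₂} x_i^{ε₁} for i < j, there exists y ∈ □(n,q) with ∂_i^ε y = x_i^ε for all i, ε. -/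
/-- The degree-`q` part `□(n,q)` of the algebra of polynomial differential forms on the
standard `n`-cube over `k`: a form is a family of polynomial coefficients indexed by the
`q`-element subsets `S` of the variables (the component of `dt_S`). -/
abbrev CubeForm (k : Type*) [Field k] (n q : ℕ) : Type _ :=
  {S : Finset (Fin n) // S.card = q} → MvPolynomial (Fin n) k

/-- The cubical face map `∂_i^ε : □(n+1,q) → □(n,q)` : substitute `t_i = ε`
(so the components containing `dt_i` die), and relabel the remaining variables by the
order-preserving bijection `Fin n ≃ Fin (n+1) \ {i}` (given by `Fin.succAbove i`). -/
noncomputable def cubeFace {k : Type*} [Field k] {n q : ℕ} (i : Fin (n + 1)) (ε : Bool)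
    (ω : CubeForm k (n + 1) q) : CubeForm k n q :=
  fun S =>
    MvPolynomial.aeval
      (fun j : Fin (n + 1) =>
        if _ : (j : ℕ) < (i : ℕ) then
          MvPolynomial.X (⟨j, by have := i.isLt; omega⟩ : Fin n)
        else if hj : j = i then (if ε then 1 else 0)
        else
          MvPolynomial.X
            (⟨(j : ℕ) - 1, by
              have := j.isLt
              have : (j : ℕ) ≠ (i : ℕ) := fun hh => hj (Fin.ext hh)
              omega⟩ : Fin n))
      (ω ⟨S.1.map (Fin.succAboveEmb i), by rw [Finset.card_map]; exact S.2⟩)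

open MvPolynomial

namespace CubeFiller

variable {k : Type*} [Field k]

/-- Evaluation `t_i := ε` as an algebra endomorphism. -/
noncomputable def ev {m : ℕ} (i : Fin m) (ε : Bool) :
    MvPolynomial (Fin m) k →ₐ[k] MvPolynomial (Fin m) k :=
  aeval fun j => if j = i then (if ε then 1 else 0) else X j

lemma ev_X {m : ℕ} (i : Fin m) (ε : Bool) (s : Fin m) :
    ev (k := k) i ε (X s) = if s = i then (if ε then 1 else 0) else X s := by
  simp [ev]

lemma ev_cst {m : ℕ} (i : Fin m) (ε ε' : Bool) :
    ev (k := k) i ε ((if ε' then 1 else 0 : MvPolynomial (Fin m) k)) =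
      (if ε' then 1 else 0) := by
  cases ε' <;> simp

lemma ev_comm {m : ℕ} {i j : Fin m} (h : i ≠ j) (ε₁ ε₂ : Bool) :
    (ev (k := k) i ε₁).comp (ev j ε₂) = (ev j ε₂).comp (ev i ε₁) := by
  apply algHom_ext
  intro s
  simp only [AlgHom.comp_apply, ev_X]
  split_ifs with h1 h2 h2 <;> simp_all [ev_X, ev_cst]

lemma ev_ev {m : ℕ} (i : Fin m) (ε ε' : Bool) :
    (ev (k := k) i ε').comp (ev i ε) = ev i ε := by
  apply algHom_ext
  intro s
  simp only [AlgHom.comp_apply, ev_X]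
  rcases eq_or_ne s i with rfl | hsi
  · rw [if_pos rfl, ev_cst]
  · rw [if_neg hsi, ev_X, if_neg hsi]

/-- `ev i ε` acts trivially on polynomials renamed away from the hole `i`. -/
lemma ev_comp_rename_self {m : ℕ} (i : Fin (m + 1)) (ε : Bool) :
    (ev (k := k) i ε).comp (rename (Fin.succAboveEmb i)) = rename (Fin.succAboveEmb i) := by
  apply algHom_ext
  intro s
  simp only [AlgHom.comp_apply, rename_X, Fin.succAboveEmb_apply, ev_X,
    if_neg (Fin.succAbove_ne i s)]

lemma ev_comp_rename {m : ℕ} (j : Fin (m + 1)) (i' : Fin m) (ε : Bool) :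
    (ev (k := k) (j.succAbove i') ε).comp (rename (Fin.succAboveEmb j)) =
      (rename (Fin.succAboveEmb j)).comp (ev i' ε) := by
  apply algHom_ext
  intro s
  simp only [AlgHom.comp_apply, rename_X, Fin.succAboveEmb_apply, ev_X]
  rcases eq_or_ne s i' with rfl | hs
  · rw [if_pos rfl, if_pos rfl]
    cases ε <;> simp
  · rw [if_neg hs, if_neg (fun hh => hs (Fin.succAbove_right_injective hh)), rename_X,
      Fin.succAboveEmb_apply]

lemma succAbove_val {m : ℕ} (i : Fin (m + 1)) (s : Fin m) :
    ((i.succAbove s : Fin (m + 1)) : ℕ) = if (s : ℕ) < (i : ℕ) then (s : ℕ) else (s : ℕ) + 1 := by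
  unfold Fin.succAbove
  rcases lt_or_ge ((s : ℕ)) ((i : ℕ)) with h | h
  · rw [if_pos (by simpa [Fin.lt_def] using h), if_pos h, Fin.coe_castSucc]
  · rw [if_neg (by simpa [Fin.lt_def, not_lt] using h), if_neg (by omega), Fin.val_succ]

/-- The key translation: the face map, followed by renaming back into `n+1` variables,
is just evaluation `t_i := ε` of the appropriate component. -/
lemma rename_cubeFace {n q : ℕ} (i : Fin (n + 1)) (ε : Bool) (ω : CubeForm k (n + 1) q)
    (S : {S : Finset (Fin n) // S.card = q}) :
    rename (Fin.succAboveEmb i) (cubeFace i ε ω S) =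
      ev i ε (ω ⟨S.1.map (Fin.succAboveEmb i), by rw [Finset.card_map]; exact S.2⟩) := by
  show rename (Fin.succAboveEmb i) (aeval _ (ω _)) = aeval _ (ω _)
  rw [comp_aeval_apply]
  congr 1
  apply algHom_ext
  intro j
  rw [aeval_X, aeval_X]
  rcases lt_trichotomy ((j : ℕ)) ((i : ℕ)) with hlt | heq | hgt
  · rw [dif_pos hlt, rename_X, if_neg (fun hh : j = i => by omega)]
    congr 1
    apply Fin.ext
    rw [Fin.succAboveEmb_apply, succAbove_val]
    simp only [if_pos hlt]
  · have hji : j = i := Fin.ext heq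
    subst hji
    rw [dif_neg (by omega), dif_pos rfl, if_pos rfl]
    cases ε <;> simp
  · have hne : j ≠ i := fun hh => by omega
    rw [dif_neg (by omega), dif_neg hne, rename_X, if_neg hne]
    congr 1
    apply Fin.ext
    rw [Fin.succAboveEmb_apply, succAbove_val]
    have := j.isLt
    simp only [Fin.val_mk]
    split_ifs <;> omega

lemma succAbove_comm {n : ℕ} (i j : Fin (n + 2)) (hij : (i : ℕ) < (j : ℕ))
    (hi : (i : ℕ) < n + 1) (hj : (j : ℕ) - 1 < n + 1) (s : Fin n) :
    j.succAbove ((⟨(i : ℕ), hi⟩ : Fin (n + 1)).succAbove s) =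
      i.succAbove ((⟨(j : ℕ) - 1, hj⟩ : Fin (n + 1)).succAbove s) := by
  have hs := s.isLt
  have hjlt := j.isLt
  apply Fin.ext
  simp only [succAbove_val]
  split_ifs <;> omega

/-- The abstract extension lemma: compatible boundary data for the evaluations `ev i ε`
can be filled, by induction on the list of constrained indices. -/
lemma fillerAux {m : ℕ} (L : List (Fin m)) (Q : Fin m → Bool → MvPolynomial (Fin m) k)
    (hQ : ∀ i ε ε', ev (k := k) i ε' (Q i ε) = Q i ε)
    (hC : ∀ i ∈ L, ∀ j ∈ L, i ≠ j → ∀ ε₁ ε₂, ev (k := k) i ε₁ (Q j ε₂) = ev j ε₂ (Q i ε₁)) :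
    ∃ P, ∀ i ∈ L, ∀ ε, ev (k := k) i ε P = Q i ε := by
  induction L with
  | nil => exact ⟨0, by simp⟩
  | cons a L ih =>
    obtain ⟨P, hP⟩ := ih (fun i hi j hj hij =>
      hC i (List.mem_cons_of_mem a hi) j (List.mem_cons_of_mem a hj) hij)
    refine ⟨P + (1 - X a) * (Q a false - ev a false P) + X a * (Q a true - ev a true P), ?_⟩
    have key : ∀ ε : Bool, ev (k := k) a ε
        (P + (1 - X a) * (Q a false - ev a false P) + X a * (Q a true - ev a true P))
        = Q a ε := by
      intro ε
      have h00 : ev (k := k) a ε (ev a false P) = ev a false P :=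
        AlgHom.congr_fun (ev_ev a false ε) P
      have h11 : ev (k := k) a ε (ev a true P) = ev a true P :=
        AlgHom.congr_fun (ev_ev a true ε) P
      have hx : ev (k := k) a ε (X a) = if ε then 1 else 0 := by
        rw [ev_X, if_pos rfl]
      cases ε <;>
        · simp only [map_add, map_mul, map_sub, map_one, hx, hQ, h00, h11, if_true, if_false,
            Bool.false_eq_true, Bool.true_eq_false]
          ring
    intro i hi ε
    rcases List.mem_cons.mp hi with rfl | hi'
    · exact key ε
    · by_cases hia : i = a
      · subst hia; exact key ε
      · have hPi := hP i hi' ε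
        have hcom : ∀ ε', ev (k := k) i ε (ev a ε' P) = ev a ε' (Q i ε) := by
          intro ε'
          have h := AlgHom.congr_fun (ev_comm hia ε ε') P
          simp only [AlgHom.comp_apply] at h
          rw [h, hPi]
        have hq0 : ev (k := k) i ε (Q a false) = ev a false (Q i ε) :=
          hC i hi a List.mem_cons_self hia ε false
        have hq1 : ev (k := k) i ε (Q a true) = ev a true (Q i ε) :=
          hC i hi a List.mem_cons_self hia ε true
        have hxa : ev (k := k) i ε (X a) = X a := by
          rw [ev_X, if_neg (Ne.symm hia)]
        simp only [map_add, map_mul, map_sub, map_one, hxa, hq0, hq1, hcom, hPi]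
        ring

/-- Preimage of a finset under `Fin.succAbove i`. -/
noncomputable def preS {m : ℕ} (T : Finset (Fin (m + 1))) (i : Fin (m + 1)) : Finset (Fin m) :=
  T.preimage (Fin.succAbove i) Fin.succAbove_right_injective.injOn

lemma mem_preS {m : ℕ} {T : Finset (Fin (m + 1))} {i : Fin (m + 1)} {s : Fin m} :
    s ∈ preS T i ↔ i.succAbove s ∈ T :=
  Finset.mem_preimage

lemma map_preS {m : ℕ} {T : Finset (Fin (m + 1))} {i : Fin (m + 1)} (h : i ∉ T) :
    (preS T i).map (Fin.succAboveEmb i) = T := by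
  ext j
  simp only [Finset.mem_map, Fin.succAboveEmb_apply, mem_preS]
  constructor
  · rintro ⟨s, hs, rfl⟩; exact hs
  · intro hj
    obtain ⟨s, rfl⟩ := Fin.exists_succAbove_eq (fun hh : j = i => h (hh ▸ hj))
    exact ⟨s, hj, rfl⟩

lemma preS_map {m : ℕ} (S : Finset (Fin m)) (i : Fin (m + 1)) :
    preS (S.map (Fin.succAboveEmb i)) i = S := by
  ext s
  simp [mem_preS, Finset.mem_map, Fin.succAboveEmb_apply, Fin.succAbove_right_inj]

lemma card_preS {m : ℕ} {T : Finset (Fin (m + 1))} {i : Fin (m + 1)} (h : i ∉ T) :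
    (preS T i).card = T.card := by
  conv_rhs => rw [← map_preS h]
  rw [Finset.card_map]

/-- The prescribed boundary value, renamed into `n+2` variables. -/
noncomputable def Qaux {n q : ℕ} (x : Fin (n + 2) → Bool → CubeForm k (n + 1) q)
    (T : Finset (Fin (n + 2))) (i : Fin (n + 2)) (ε : Bool) : MvPolynomial (Fin (n + 2)) k :=
  if h : (preS T i).card = q then rename (Fin.succAboveEmb i) (x i ε ⟨preS T i, h⟩) else 0

lemma ev_Qaux_self {n q : ℕ} (x : Fin (n + 2) → Bool → CubeForm k (n + 1) q)
    (T : Finset (Fin (n + 2))) (i : Fin (n + 2)) (ε ε' : Bool) :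
    ev i ε' (Qaux x T i ε) = Qaux x T i ε := by
  unfold Qaux
  split
  · exact AlgHom.congr_fun (ev_comp_rename_self i ε') _
  · exact map_zero _

lemma fin_lt_aux {n : ℕ} {i j : Fin (n + 2)} (h : (i : ℕ) < (j : ℕ)) : (i : ℕ) < n + 1 :=
  Nat.lt_of_lt_of_le h (Nat.le_of_lt_succ j.isLt)

lemma fin_sub_aux {n : ℕ} (j : Fin (n + 2)) : (j : ℕ) - 1 < n + 1 :=
  by have := j.isLt; omega

lemma Qaux_compat_lt {n q : ℕ} (x : Fin (n + 2) → Bool → CubeForm k (n + 1) q)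
    (compat : ∀ (i j : Fin (n + 2)) (hij : (i : ℕ) < (j : ℕ)) (ε₁ ε₂ : Bool),
      cubeFace (⟨(i : ℕ), fin_lt_aux hij⟩ : Fin (n + 1)) ε₁ (x j ε₂) =
        cubeFace (⟨(j : ℕ) - 1, fin_sub_aux j⟩ : Fin (n + 1)) ε₂ (x i ε₁))
    {T : Finset (Fin (n + 2))} (hT : T.card = q)
    {i j : Fin (n + 2)} (hi : i ∉ T) (hj : j ∉ T) (hij : (i : ℕ) < (j : ℕ)) (ε₁ ε₂ : Bool) :
    ev i ε₁ (Qaux x T j ε₂) = ev j ε₂ (Qaux x T i ε₁) := by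
  have hjlt := j.isLt
  have hi1 : (i : ℕ) < n + 1 := by omega
  have hj1 : (j : ℕ) - 1 < n + 1 := by omega
  set i' : Fin (n + 1) := ⟨(i : ℕ), hi1⟩ with hi'def
  set j₁ : Fin (n + 1) := ⟨(j : ℕ) - 1, hj1⟩ with hj₁def
  have hi'val : (i' : ℕ) = (i : ℕ) := by rw [hi'def]
  have hj₁val : (j₁ : ℕ) = (j : ℕ) - 1 := by rw [hj₁def]
  have hsai : j.succAbove i' = i := by
    apply Fin.ext
    rw [succAbove_val, if_pos (show (i' : ℕ) < (j : ℕ) by omega), hi'val]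
  have hsaj : i.succAbove j₁ = j := by
    apply Fin.ext
    rw [succAbove_val, if_neg (show ¬ (j₁ : ℕ) < (i : ℕ) by omega), hj₁val]
    omega
  have compat'' : cubeFace i' ε₁ (x j ε₂) = cubeFace j₁ ε₂ (x i ε₁) := by
    rw [hi'def, hj₁def]; exact compat i j hij ε₁ ε₂
  have hine : i' ∉ preS T j := fun hmem => hi (by rwa [mem_preS, hsai] at hmem)
  have hjne : j₁ ∉ preS T i := fun hmem => hj (by rwa [mem_preS, hsaj] at hmem)
  have hcj : (preS T j).card = q := by rw [card_preS hj, hT]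
  have hci : (preS T i).card = q := by rw [card_preS hi, hT]
  have hS'map : (preS (preS T j) i').map (Fin.succAboveEmb i') = preS T j := map_preS hine
  have hcS' : (preS (preS T j) i').card = q := by rw [card_preS hine, hcj]
  have hcS'' : (preS (preS T i) j₁).card = q := by rw [card_preS hjne, hci]
  have embeq : (Fin.succAboveEmb i').trans (Fin.succAboveEmb j) =
      (Fin.succAboveEmb j₁).trans (Fin.succAboveEmb i) := by
    ext s
    simp only [Function.Embedding.trans_apply, Fin.succAboveEmb_apply, hi'def, hj₁def]
    exact congrArg Fin.val (succAbove_comm i j hij hi1 hj1 s)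
  have hmapT : ((preS (preS T j) i').map (Fin.succAboveEmb j₁)).map (Fin.succAboveEmb i) = T := by
    rw [Finset.map_map, ← embeq, ← Finset.map_map, hS'map, map_preS hj]
  have hSieq : preS T i = (preS (preS T j) i').map (Fin.succAboveEmb j₁) :=
    Finset.map_injective (Fin.succAboveEmb i) (by rw [map_preS hi, hmapT])
  have hSjS' : preS (preS T i) j₁ = preS (preS T j) i' := by rw [hSieq, preS_map]
  have hsub : (⟨preS (preS T i) j₁, hcS''⟩ : {S : Finset (Fin n) // S.card = q}) =
      ⟨preS (preS T j) i', hcS'⟩ := Subtype.ext hSjS'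
  have stepL : ev (k := k) i ε₁ (rename (Fin.succAboveEmb j) (x j ε₂ ⟨preS T j, hcj⟩)) =
      rename (Fin.succAboveEmb j) (ev i' ε₁ (x j ε₂ ⟨preS T j, hcj⟩)) := by
    conv_lhs => rw [← hsai]
    exact AlgHom.congr_fun (ev_comp_rename j i' ε₁) _
  have stepL2 : ev (k := k) i' ε₁ (x j ε₂ ⟨preS T j, hcj⟩) =
      rename (Fin.succAboveEmb i')
        (cubeFace i' ε₁ (x j ε₂) ⟨preS (preS T j) i', hcS'⟩) := by
    rw [rename_cubeFace]
    exact congrArg (ev i' ε₁) (congrArg (x j ε₂) (Subtype.ext hS'map.symm))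
  have stepR : ev (k := k) j ε₂ (rename (Fin.succAboveEmb i) (x i ε₁ ⟨preS T i, hci⟩)) =
      rename (Fin.succAboveEmb i) (ev j₁ ε₂ (x i ε₁ ⟨preS T i, hci⟩)) := by
    conv_lhs => rw [← hsaj]
    exact AlgHom.congr_fun (ev_comp_rename i j₁ ε₂) _
  have stepR2 : ev (k := k) j₁ ε₂ (x i ε₁ ⟨preS T i, hci⟩) =
      rename (Fin.succAboveEmb j₁)
        (cubeFace j₁ ε₂ (x i ε₁) ⟨preS (preS T i) j₁, hcS''⟩) := by
    rw [rename_cubeFace]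
    exact congrArg (ev j₁ ε₂) (congrArg (x i ε₁) (Subtype.ext (map_preS hjne).symm))
  have funeq : (⇑(Fin.succAboveEmb j) ∘ ⇑(Fin.succAboveEmb i') : Fin n → Fin (n + 2)) =
      ⇑(Fin.succAboveEmb i) ∘ ⇑(Fin.succAboveEmb j₁) := by
    funext s
    have h := DFunLike.congr_fun embeq s
    simpa [Function.Embedding.trans_apply] using h
  calc ev (k := k) i ε₁ (Qaux x T j ε₂)
      = ev i ε₁ (rename (Fin.succAboveEmb j) (x j ε₂ ⟨preS T j, hcj⟩)) := by
        rw [Qaux, dif_pos hcj]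
    _ = rename (Fin.succAboveEmb j) (ev i' ε₁ (x j ε₂ ⟨preS T j, hcj⟩)) := stepL
    _ = rename (Fin.succAboveEmb j) (rename (Fin.succAboveEmb i')
          (cubeFace i' ε₁ (x j ε₂) ⟨preS (preS T j) i', hcS'⟩)) := by rw [stepL2]
    _ = rename (⇑(Fin.succAboveEmb j) ∘ ⇑(Fin.succAboveEmb i'))
          (cubeFace i' ε₁ (x j ε₂) ⟨preS (preS T j) i', hcS'⟩) := rename_rename _ _ _
    _ = rename (⇑(Fin.succAboveEmb i) ∘ ⇑(Fin.succAboveEmb j₁))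
          (cubeFace j₁ ε₂ (x i ε₁) ⟨preS (preS T j) i', hcS'⟩) := by rw [funeq, compat'']
    _ = rename (Fin.succAboveEmb i) (rename (Fin.succAboveEmb j₁)
          (cubeFace j₁ ε₂ (x i ε₁) ⟨preS (preS T j) i', hcS'⟩)) := (rename_rename _ _ _).symm
    _ = rename (Fin.succAboveEmb i) (ev j₁ ε₂ (x i ε₁ ⟨preS T i, hci⟩)) := by
        rw [stepR2, hsub]
    _ = ev j ε₂ (rename (Fin.succAboveEmb i) (x i ε₁ ⟨preS T i, hci⟩)) := stepR.symm
    _ = ev j ε₂ (Qaux x T i ε₁) := by rw [Qaux, dif_pos hci]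

lemma Qaux_compat {n q : ℕ} (x : Fin (n + 2) → Bool → CubeForm k (n + 1) q)
    (compat : ∀ (i j : Fin (n + 2)) (hij : (i : ℕ) < (j : ℕ)) (ε₁ ε₂ : Bool),
      cubeFace (⟨(i : ℕ), fin_lt_aux hij⟩ : Fin (n + 1)) ε₁ (x j ε₂) =
        cubeFace (⟨(j : ℕ) - 1, fin_sub_aux j⟩ : Fin (n + 1)) ε₂ (x i ε₁))
    {T : Finset (Fin (n + 2))} (hT : T.card = q)
    {i j : Fin (n + 2)} (hi : i ∉ T) (hj : j ∉ T) (hij : i ≠ j) (ε₁ ε₂ : Bool) :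
    ev i ε₁ (Qaux x T j ε₂) = ev j ε₂ (Qaux x T i ε₁) := by
  rcases lt_trichotomy ((i : ℕ)) ((j : ℕ)) with h | h | h
  · exact Qaux_compat_lt x compat hT hi hj h ε₁ ε₂
  · exact absurd (Fin.ext h) hij
  · exact (Qaux_compat_lt x compat hT hj hi h ε₂ ε₁).symm

end CubeFiller

/-- For each `q ≥ 0` the cubical abelian group `n ↦ □(n,q)` of degree-`q`
polynomial forms on the standard cubes satisfies the Kan extension property with respect
to boundary inclusions (the map `□(·,q) → *` is a trivial fibration of cubical sets):
given faces `x_i^ε ∈ □(n+1,q)` (`i ∈ Fin (n+2)`, `ε ∈ {0,1}`) satisfying the cubical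
compatibility relations `∂_i^{ε₁} x_j^{ε₂} = ∂_{j−1}^{ε₂} x_i^{ε₁}` for `i < j`, there
exists a filler `y ∈ □(n+2,q)` with `∂_i^ε y = x_i^ε` for all `i, ε`. -/
theorem cube_forms_boundary_filler
    (k : Type*) [Field k] (n q : ℕ)
    (x : Fin (n + 2) → Bool → CubeForm k (n + 1) q)
    (compat : ∀ (i j : Fin (n + 2)) (hij : (i : ℕ) < (j : ℕ)) (ε₁ ε₂ : Bool),
      cubeFace (⟨(i : ℕ), by have := j.isLt; omega⟩ : Fin (n + 1)) ε₁ (x j ε₂) =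
        cubeFace (⟨(j : ℕ) - 1, by have := j.isLt; omega⟩ : Fin (n + 1)) ε₂ (x i ε₁)) :
    ∃ y : CubeForm k (n + 2) q, ∀ (i : Fin (n + 2)) (ε : Bool), cubeFace i ε y = x i ε := by
  classical
  have hmain : ∀ T : {S : Finset (Fin (n + 2)) // S.card = q},
      ∃ P : MvPolynomial (Fin (n + 2)) k, ∀ i ∉ T.1, ∀ ε : Bool,
        CubeFiller.ev i ε P = CubeFiller.Qaux x T.1 i ε := by
    intro T
    obtain ⟨P, hP⟩ := CubeFiller.fillerAux
      ((List.finRange (n + 2)).filter (fun i => decide (i ∉ T.1)))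
      (CubeFiller.Qaux x T.1)
      (fun i ε ε' => CubeFiller.ev_Qaux_self x T.1 i ε ε')
      (fun i hi j hj hij ε₁ ε₂ => by
        have hi' : i ∉ T.1 := by simpa using (List.mem_filter.mp hi).2
        have hj' : j ∉ T.1 := by simpa using (List.mem_filter.mp hj).2
        exact CubeFiller.Qaux_compat x compat T.2 hi' hj' hij ε₁ ε₂)
    refine ⟨P, fun i hi ε => hP i ?_ ε⟩
    simp [List.mem_filter, List.mem_finRange, hi]
  choose y hy using hmain
  refine ⟨y, fun i ε => ?_⟩
  funext S
  apply MvPolynomial.rename_injective _ (Fin.succAboveEmb i).injective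
  rw [CubeFiller.rename_cubeFace]
  have hnot : i ∉ S.1.map (Fin.succAboveEmb i) := by
    simp only [Finset.mem_map, Fin.succAboveEmb_apply]
    rintro ⟨s, -, hs⟩
    exact Fin.succAbove_ne i s hs
  rw [hy ⟨S.1.map (Fin.succAboveEmb i), by rw [Finset.card_map]; exact S.2⟩ i hnot ε]
  have hpre : CubeFiller.preS (S.1.map (Fin.succAboveEmb i)) i = S.1 :=
    CubeFiller.preS_map S.1 i
  have hcard : (CubeFiller.preS (S.1.map (Fin.succAboveEmb i)) i).card = q := by
    rw [hpre]; exact S.2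
  rw [CubeFiller.Qaux, dif_pos hcard]
  exact congrArg (MvPolynomial.rename (Fin.succAboveEmb i))
    (congrArg (x i ε) (Subtype.ext hpre))
end
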